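/- If φ : Z/nZ → {±1} is a binary sequence and φ' its expansion (the concatenation of φ and -φ), then R_{φ'}(w) = 0 for all 0 < w < 2n if and only if n = 2 or n = 1 (i.e., no generalized perfect binary sequence of length n > 2 exists). -/

import Mathlib

open Polynomial Finset


private lemma dvd_of_map_eq_zero' (m : ℕ) [NeZero m] (p : ℤ[X])
    (h : p.map (Int.castRingHom (ZMod m)) = 0) : (Polynomial.C ((m:ℕ):ℤ)) ∣ p := by
  rw [Polynomial.C_dvd_iff_dvd_coeff]
  intro i
  have h2 := congrArg (fun q => Polynomial.coeff q i) h
  simp only [Polynomial.coeff_map, Polynomial.coeff_zero, Int.coe_castRingHom] at h2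
  exact_mod_cast (ZMod.intCast_zmod_eq_zero_iff_dvd _ m).mp h2

private lemma two_dvd_iff_map_eq_zero (p : ℤ[X]) :
    (2:ℤ[X]) ∣ p ↔ p.map (Int.castRingHom (ZMod 2)) = 0 := by
  constructor
  · rintro ⟨c, rfl⟩
    rw [Polynomial.map_mul]
    have h2 : ((2:ℤ[X]).map (Int.castRingHom (ZMod 2))) = 0 := by
      have : (2:ℤ[X]) = Polynomial.C (2:ℤ) := by norm_num
      rw [this, Polynomial.map_C]
      simp
      decide
    rw [h2, zero_mul]
  · intro h
    have := dvd_of_map_eq_zero' 2 p h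
    have hc : (Polynomial.C ((2:ℕ):ℤ)) = (2:ℤ[X]) := by norm_num
    rwa [hc] at this

private lemma two_prime_mul (p q : ℤ[X]) (h : (2:ℤ[X]) ∣ p * q) :
    (2:ℤ[X]) ∣ p ∨ (2:ℤ[X]) ∣ q := by
  have hh : p.map (Int.castRingHom (ZMod 2)) * q.map (Int.castRingHom (ZMod 2)) = 0 := by
    rw [← Polynomial.map_mul]
    exact (two_dvd_iff_map_eq_zero _).mp h
  rcases mul_eq_zero.mp hh with h' | h'
  · exact Or.inl ((two_dvd_iff_map_eq_zero _).mpr h')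
  · exact Or.inr ((two_dvd_iff_map_eq_zero _).mpr h')

private lemma not_dvd_aux (n : ℕ) (hn : 3 ≤ n) :
    ¬ ((X:(ZMod 2)[X])^n + 1 ∣ (X - 1)^2) := by
  intro h
  have h2 : ((X:(ZMod 2)[X]) - 1) ≠ 0 := by
    have := Polynomial.X_sub_C_ne_zero (R := ZMod 2) 1
    simpa using this
  have hd := Polynomial.natDegree_le_of_dvd h (pow_ne_zero 2 h2)
  have e1 : ((X:(ZMod 2)[X])^n + 1).natDegree = n := by
    rw [← Polynomial.C_1, Polynomial.natDegree_X_pow_add_C]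
  have e2 : (((X:(ZMod 2)[X]) - 1)^2).natDegree = 2 := by
    rw [Polynomial.natDegree_pow]
    rw [show ((X:(ZMod 2)[X]) - 1) = X - C 1 by simp, Polynomial.natDegree_X_sub_C]
  omega

private lemma no_gpbs_poly (n : ℕ) (hn : 3 ≤ n) (ρ ρ' g : ℤ[X])
    (hM : ((∑ j ∈ Finset.range n, (X:ℤ[X]) ^ j) + 2 * ρ) *
          ((∑ j ∈ Finset.range n, (X:ℤ[X]) ^ j) + 2 * ρ')
      = Polynomial.C ((n:ℕ):ℤ) + ((X:ℤ[X]) ^ n + 1) * g) : False := by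
  have hS : (∑ j ∈ Finset.range n, (X:ℤ[X]) ^ j) * ((X:ℤ[X]) - 1) = (X:ℤ[X])^n - 1 :=
    geom_sum_mul X n
  set S : ℤ[X] := ∑ j ∈ Finset.range n, (X:ℤ[X]) ^ j with hSdef
  set u : ℤ[X] := (X:ℤ[X]) - 1 with hudef
  set a : ℤ[X] := (X:ℤ[X])^n with hadef
  set μ : ℤ[X] := ρ + ρ' with hμdef
  have hane : ¬ (2:ℤ[X]) ∣ (a + 1) := by
    rw [two_dvd_iff_map_eq_zero]
    intro h0
    simp only [hadef, Polynomial.map_add, Polynomial.map_pow, Polynomial.map_X,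
      Polynomial.map_one] at h0
    have : ((X:(ZMod 2)[X])^n + 1) ≠ 0 := by
      have hmonic : ((X:(ZMod 2)[X])^n + 1).Monic := by
        rw [← Polynomial.C_1]
        exact Polynomial.monic_X_pow_add_C _ (by omega)
      exact hmonic.ne_zero
    exact this h0
  -- master identity multiplied by u^2
  have E1 : (a - 1)^2 + 2*u*μ*(a-1) + 4*u^2*(ρ*ρ')
      = Polynomial.C ((n:ℕ):ℤ)*u^2 + u^2*(a+1)*g := by
    linear_combination u^2*hM - (a - 1 + u*S + 2*u*μ)*hS
  rcases Nat.even_or_odd n with ⟨m, hm⟩ | ⟨m, hm⟩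
  · -- n even, n = m + m
    have hCn : Polynomial.C ((n:ℕ):ℤ) = 2 * Polynomial.C ((m:ℕ):ℤ) := by
      have : ((n:ℕ):ℤ) = ((m:ℕ):ℤ) + ((m:ℕ):ℤ) := by rw [hm]; push_cast; ring
      rw [this, map_add]; ring
    have hd1 : (a+1) * ((a+1) - u^2*g) =
        2*(2*a - u*μ*(a-1) - 2*u^2*(ρ*ρ') + Polynomial.C ((m:ℕ):ℤ)*u^2) := by
      linear_combination E1 + u^2*hCn
    rcases two_prime_mul _ _ ⟨_, hd1⟩ with h | h
    · exact hane h
    obtain ⟨h₁, hh₁⟩ := h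
    have h2P : 2 * (-(2*a) + u*μ*(a-1) + 2*u^2*(ρ*ρ') - Polynomial.C ((m:ℕ):ℤ)*u^2
        + h₁*(a+1)) = 0 := by
      linear_combination E1 - (a+1)*hh₁ + u^2*hCn
    have hP : (-(2*a) + u*μ*(a-1) + 2*u^2*(ρ*ρ') - Polynomial.C ((m:ℕ):ℤ)*u^2
        + h₁*(a+1)) = 0 :=
      (mul_eq_zero.mp h2P).resolve_left (by norm_num)
    rcases Nat.even_or_odd m with ⟨l, hl⟩ | ⟨l, hl⟩
    · -- m even : eval at 1 contradiction
      have hCm : Polynomial.C ((m:ℕ):ℤ) = 2 * Polynomial.C ((l:ℕ):ℤ) := by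
        have : ((m:ℕ):ℤ) = ((l:ℕ):ℤ) + ((l:ℕ):ℤ) := by rw [hl]; push_cast; ring
        rw [this, map_add]; ring
      have hd2 : (a+1) * (u*μ + h₁) =
          2*(a + u*μ - u^2*(ρ*ρ') + Polynomial.C ((l:ℕ):ℤ)*u^2) := by
        linear_combination hP + u^2*hCm
      rcases two_prime_mul _ _ ⟨_, hd2⟩ with h | h
      · exact hane h
      obtain ⟨w, hw⟩ := h
      have hfin : (a+1) * (2*w) = 2*(a + u*μ - u^2*(ρ*ρ') + Polynomial.C ((l:ℕ):ℤ)*u^2) := by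
        rw [← hw]; exact hd2
      have hfin2 : (a+1)*w = a + u*μ - u^2*(ρ*ρ') + Polynomial.C ((l:ℕ):ℤ)*u^2 := by
        have : (2:ℤ[X]) * ((a+1)*w) = 2 * (a + u*μ - u^2*(ρ*ρ') + Polynomial.C ((l:ℕ):ℤ)*u^2) := by
          linear_combination hfin
        exact mul_left_cancel₀ (by norm_num : (2:ℤ[X]) ≠ 0) this
      have := congrArg (Polynomial.eval 1) hfin2
      simp [hadef, hudef] at this
      omega
    · -- m odd : divisibility contradiction
      have hCm : Polynomial.C ((m:ℕ):ℤ) = 2 * Polynomial.C ((l:ℕ):ℤ) + 1 := by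
        have : ((m:ℕ):ℤ) = ((l:ℕ):ℤ) + ((l:ℕ):ℤ) + 1 := by rw [hl]; push_cast; ring
        rw [this, map_add, map_add, Polynomial.C_1]; ring
      have hd2 : (a+1) * (u*μ + h₁) - u^2 =
          2*(a + u*μ - u^2*(ρ*ρ') + Polynomial.C ((l:ℕ):ℤ)*u^2) := by
        linear_combination hP + u^2*hCm
      have h0 := (two_dvd_iff_map_eq_zero _).mp ⟨_, hd2⟩
      simp only [hadef, hudef, Polynomial.map_sub, Polynomial.map_add, Polynomial.map_mul,
        Polynomial.map_pow, Polynomial.map_X, Polynomial.map_one] at h0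
      refine not_dvd_aux n hn ⟨(((X:ℤ[X]) - 1)*μ + h₁).map (Int.castRingHom (ZMod 2)), ?_⟩
      have h0' : ((X:(ZMod 2)[X])^n + 1) *
          ((((X:ℤ[X]) - 1)*μ + h₁).map (Int.castRingHom (ZMod 2))) - (X - 1)^2 = 0 := by
        simp only [Polynomial.map_add, Polynomial.map_mul, Polynomial.map_sub,
          Polynomial.map_X, Polynomial.map_one]
        linear_combination h0
      linear_combination -h0'
  · -- n odd, n = 2*m+1
    have hCn : Polynomial.C ((n:ℕ):ℤ) = 2 * Polynomial.C ((m:ℕ):ℤ) + 1 := by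
      have : ((n:ℕ):ℤ) = ((m:ℕ):ℤ) + ((m:ℕ):ℤ) + 1 := by rw [hm]; push_cast; ring
      rw [this, map_add, map_add, Polynomial.C_1]; ring
    have hd1 : (a+1) * ((a+1) - u^2*g) - u^2 =
        2*(2*a - u*μ*(a-1) - 2*u^2*(ρ*ρ') + Polynomial.C ((m:ℕ):ℤ)*u^2) := by
      linear_combination E1 + u^2*hCn
    have h0 := (two_dvd_iff_map_eq_zero _).mp ⟨_, hd1⟩
    simp only [hadef, hudef, Polynomial.map_sub, Polynomial.map_add, Polynomial.map_mul,
      Polynomial.map_pow, Polynomial.map_X, Polynomial.map_one] at h0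
    refine not_dvd_aux n hn ⟨(((X:ℤ[X])^n + 1) - ((X:ℤ[X])-1)^2*g).map (Int.castRingHom (ZMod 2)), ?_⟩
    have h0' : ((X:(ZMod 2)[X])^n + 1) *
        ((((X:ℤ[X])^n + 1) - ((X:ℤ[X])-1)^2*g).map (Int.castRingHom (ZMod 2))) - (X-1)^2 = 0 := by
      simp only [Polynomial.map_add, Polynomial.map_mul, Polynomial.map_sub,
        Polynomial.map_X, Polynomial.map_one, Polynomial.map_pow]
      linear_combination h0
    linear_combination -h0'


private lemma forward_false (n : ℕ) [NeZero n] [NeZero (2*n)] (hn3 : 3 ≤ n)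
    (φ : ZMod n → ℤ) (hφ : ∀ k, φ k = 1 ∨ φ k = -1)
    (φ' : ZMod (2*n) → ℤ)
    (hexp : ∀ k : ZMod (2*n), φ' k = (if k.val < n then (1:ℤ) else -1) * φ ((k.val : ZMod n)))
    (H : ∀ w : ZMod (2*n), w ≠ 0 → w ≠ (n : ZMod (2*n)) →
      ∑ k : ZMod (2*n), φ' k * φ' (k+w) = 0) : False := by
  have hnN : n < 2*n := by have := NeZero.pos n; omega
  have hφ' : ∀ k, φ' k = 1 ∨ φ' k = -1 := by
    intro k
    rcases hφ ((k.val : ZMod n)) with h | h <;> rw [hexp, h] <;> split <;> simp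
  have hφ'sq : ∀ k, φ' k * φ' k = 1 := by
    intro k; rcases hφ' k with h | h <;> rw [h] <;> norm_num
  have hvn : ((n:ℕ) : ZMod (2*n)).val = n := ZMod.val_natCast_of_lt hnN
  have hvaladd : ∀ k : ZMod (2*n),
      (k + ((n:ℕ):ZMod (2*n))).val = if k.val < n then k.val + n else k.val - n := by
    intro k
    have h1 : (k + ((n:ℕ):ZMod (2*n))).val = (k.val + n) % (2*n) := by
      rw [ZMod.val_add, hvn]
    have hk := ZMod.val_lt k
    split
    · next h => rw [h1, Nat.mod_eq_of_lt (by omega)]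
    · next h =>
      rw [h1, show k.val + n = (k.val - n) + 1*(2*n) by omega, Nat.add_mul_mod_self_right,
        Nat.mod_eq_of_lt (by omega)]
  have hcastsub : ∀ v : ℕ, n ≤ v → (((v - n : ℕ)) : ZMod n) = ((v : ℕ) : ZMod n) := by
    intro v hv
    have h2 : (v - n) + n = v := by omega
    calc ((v - n : ℕ) : ZMod n) = ((v - n : ℕ) : ZMod n) + ((n:ℕ) : ZMod n) := by
          rw [ZMod.natCast_self]; ring
      _ = (((v - n) + n : ℕ) : ZMod n) := by push_cast; ring
      _ = _ := by rw [h2]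
  have hflip : ∀ k : ZMod (2*n), φ' (k + ((n:ℕ):ZMod (2*n))) = - φ' k := by
    intro k
    rw [hexp, hexp, hvaladd k]
    have hk := ZMod.val_lt k
    split
    · next h =>
      rw [if_neg (by omega)]
      have hc : (((k.val + n : ℕ)) : ZMod n) = ((k.val : ℕ) : ZMod n) := by
        push_cast [ZMod.natCast_self]; ring
      rw [hc]; ring
    · next h =>
      rw [if_pos (by omega), hcastsub k.val (by omega)]; ring
  -- the ring A
  set A := AdjoinRoot ((X:ℤ[X])^n + 1) with hAdef
  set x : A := AdjoinRoot.root _ with hxdef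
  have hxn : x^n = -1 := by
    have h0 : (AdjoinRoot.mk ((X:ℤ[X])^n + 1)) ((X:ℤ[X])^n + 1) = 0 := AdjoinRoot.mk_self
    rw [map_add, map_pow, AdjoinRoot.mk_X, map_one] at h0
    exact eq_neg_of_add_eq_zero_left h0
  have hx2n : x^(2*n) = 1 := by
    have h : x^(2*n) = (x^n)^2 := by rw [← pow_mul, Nat.mul_comm]
    rw [h, hxn]; ring
  have hxmod : ∀ m : ℕ, x ^ m = x ^ (m % (2*n)) := by
    intro m
    conv_lhs => rw [← Nat.mod_add_div m (2*n)]
    rw [pow_add, pow_mul, hx2n, one_pow, mul_one]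
  have hxadd : ∀ a b : ZMod (2*n), x ^ (a + b).val = x ^ a.val * x ^ b.val := by
    intro a b
    rw [ZMod.val_add, ← hxmod, pow_add]
  -- halving lemma
  have halve : ∀ ψ : ZMod (2*n) → ℤ, (∀ k, ψ (k + ((n:ℕ):ZMod (2*n))) = - ψ k) →
      ∑ k : ZMod (2*n), (ψ k : A) * x ^ k.val
        = 2 * ∑ j ∈ Finset.range n, (ψ ((j:ℕ) : ZMod (2*n)) : A) * x ^ j := by
    intro ψ hψ
    have hsplit := Finset.sum_filter_add_sum_filter_not Finset.univ
      (fun k : ZMod (2*n) => k.val < n) (fun k => (ψ k : A) * x ^ k.val)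
    have h2 : ∑ k ∈ Finset.univ.filter (fun k : ZMod (2*n) => ¬ k.val < n),
        (ψ k : A) * x ^ k.val
        = ∑ k ∈ Finset.univ.filter (fun k : ZMod (2*n) => k.val < n),
        (ψ k : A) * x ^ k.val := by
      apply Finset.sum_nbij' (fun k => k + ((n:ℕ):ZMod (2*n)))
        (fun k => k + ((n:ℕ):ZMod (2*n)))
      · intro k hk
        simp only [Finset.mem_filter, Finset.mem_univ, true_and, not_lt] at hk ⊢
        rw [hvaladd, if_neg (by omega)]
        have := ZMod.val_lt k; omega
      · intro k hk
        simp only [Finset.mem_filter, Finset.mem_univ, true_and, not_lt] at hk ⊢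
        rw [hvaladd, if_pos hk]; omega
      · intro k _
        rw [add_assoc, ← Nat.cast_add, show n + n = 2*n by ring, ZMod.natCast_self, add_zero]
      · intro k _
        rw [add_assoc, ← Nat.cast_add, show n + n = 2*n by ring, ZMod.natCast_self, add_zero]
      · intro k hk
        simp only [Finset.mem_filter, Finset.mem_univ, true_and, not_lt] at hk
        have hkb := ZMod.val_lt k
        rw [hψ, hvaladd, if_neg (by omega)]
        have hxx : x ^ k.val = x ^ (k.val - n) * x ^ n := by
          rw [← pow_add]; congr 1; omega
        rw [hxx, hxn]
        push_cast
        ring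
    have h3 : ∑ k ∈ Finset.univ.filter (fun k : ZMod (2*n) => k.val < n),
        (ψ k : A) * x ^ k.val
        = ∑ j ∈ Finset.range n, (ψ ((j:ℕ) : ZMod (2*n)) : A) * x ^ j := by
      apply Finset.sum_nbij' (fun k : ZMod (2*n) => k.val) (fun j : ℕ => ((j:ℕ):ZMod (2*n)))
      · intro k hk
        simp only [Finset.mem_filter, Finset.mem_univ, true_and] at hk
        simpa using hk
      · intro j hj
        simp only [Finset.mem_range] at hj
        simp only [Finset.mem_filter, Finset.mem_univ, true_and]
        rw [ZMod.val_natCast_of_lt (by omega)]; exact hj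
      · intro k _; exact ZMod.natCast_rightInverse k
      · intro j hj
        simp only [Finset.mem_range] at hj
        exact ZMod.val_natCast_of_lt (by omega)
      · intro k _
        rw [ZMod.natCast_rightInverse k]
    rw [← hsplit, h2, h3]
    ring
  -- E * E' = 4n
  have hEE' : (∑ k : ZMod (2*n), (φ' k : A) * x ^ k.val) *
      (∑ k : ZMod (2*n), (φ' k : A) * x ^ (-k).val) = ((4*(n:ℤ) : ℤ) : A) := by
    rw [Finset.sum_mul_sum]
    have step1 : ∀ k j : ZMod (2*n),
        ((φ' k : A) * x ^ k.val) * ((φ' j : A) * x ^ (-j).val)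
          = ((φ' k : A) * (φ' j : A)) * x ^ ((k - j).val) := by
      intro k j
      rw [sub_eq_add_neg, hxadd]; ring
    calc (∑ k : ZMod (2*n), ∑ j : ZMod (2*n),
            ((φ' k : A) * x ^ k.val) * ((φ' j : A) * x ^ (-j).val))
        = ∑ j : ZMod (2*n), ∑ k : ZMod (2*n), ((φ' k : A) * (φ' j : A)) * x ^ ((k - j).val) := by
          rw [Finset.sum_comm]
          exact Finset.sum_congr rfl (fun j _ => Finset.sum_congr rfl (fun k _ => step1 k j))
      _ = ∑ j : ZMod (2*n), ∑ w : ZMod (2*n), ((φ' (j + w) : A) * (φ' j : A)) * x ^ w.val := by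
          refine Finset.sum_congr rfl (fun j _ => ?_)
          refine (Fintype.sum_equiv (Equiv.addLeft j)
            (fun w => ((φ' (j + w) : A) * (φ' j : A)) * x ^ w.val)
            (fun k => ((φ' k : A) * (φ' j : A)) * x ^ ((k - j).val)) (fun w => ?_)).symm
          simp [Equiv.coe_addLeft, add_sub_cancel_left]
      _ = ∑ w : ZMod (2*n), ((∑ j : ZMod (2*n), φ' j * φ' (j + w) : ℤ) : A) * x ^ w.val := by
          rw [Finset.sum_comm]
          refine Finset.sum_congr rfl (fun w _ => ?_)
          push_cast [A]
          rw [Finset.sum_mul]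
          exact Finset.sum_congr rfl (fun j _ => by ring)
      _ = ∑ w ∈ ({0, ((n:ℕ):ZMod (2*n))} : Finset (ZMod (2*n))),
            ((∑ j : ZMod (2*n), φ' j * φ' (j + w) : ℤ) : A) * x ^ w.val := by
          refine (Finset.sum_subset (Finset.subset_univ _) (fun w _ hw => ?_)).symm
          simp only [Finset.mem_insert, Finset.mem_singleton, not_or] at hw
          rw [H w hw.1 hw.2]
          push_cast
          ring
      _ = ((4*(n:ℤ) : ℤ) : A) := by
          have hne : (0 : ZMod (2*n)) ≠ ((n:ℕ):ZMod (2*n)) := by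
            intro h
            have := hvn
            rw [← h] at this
            simp only [ZMod.val_zero] at this
            omega
          rw [Finset.sum_pair hne]
          have hR0 : (∑ j : ZMod (2*n), φ' j * φ' (j + 0) : ℤ) = 2*n := by
            simp only [add_zero]
            rw [Finset.sum_congr rfl (fun j _ => hφ'sq j)]
            simp [Finset.card_univ, ZMod.card]
          have hRn : (∑ j : ZMod (2*n), φ' j * φ' (j + ((n:ℕ):ZMod (2*n))) : ℤ) = -(2*n) := by
            have : ∀ j : ZMod (2*n), φ' j * φ' (j + ((n:ℕ):ZMod (2*n))) = -1 := by
              intro j; rw [hflip]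
              have := hφ'sq j
              nlinarith [hφ'sq j]
            rw [Finset.sum_congr rfl (fun j _ => this j)]
            simp [Finset.card_univ, ZMod.card]
          rw [hR0, hRn, ZMod.val_zero, pow_zero]
          have hxvn : x ^ (((n:ℕ):ZMod (2*n)).val) = -1 := by rw [hvn, hxn]
          rw [hxvn]
          push_cast [A]
          ring
  -- neg reindex of E'
  have hneg : (∑ k : ZMod (2*n), (φ' k : A) * x ^ (-k).val)
      = ∑ k : ZMod (2*n), (φ' (-k) : A) * x ^ k.val := by
    refine Fintype.sum_equiv (Equiv.neg _) _ _ (fun k => ?_)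
    simp
  have hnegn : -((n:ℕ):ZMod (2*n)) = ((n:ℕ):ZMod (2*n)) := by
    have h : ((n:ℕ):ZMod (2*n)) + ((n:ℕ):ZMod (2*n)) = 0 := by
      rw [← Nat.cast_add, show n + n = 2*n by ring, ZMod.natCast_self]
    exact neg_eq_of_add_eq_zero_left h
  -- the two polynomials
  set q : ℤ[X] := ∑ j ∈ Finset.range n, Polynomial.C (φ' ((j:ℕ):ZMod (2*n))) * X^j with hqdef
  set qt : ℤ[X] := ∑ j ∈ Finset.range n, Polynomial.C (φ' (-((j:ℕ):ZMod (2*n)))) * X^j with hqtdef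
  have hmkq : AdjoinRoot.mk ((X:ℤ[X])^n + 1) q
      = ∑ j ∈ Finset.range n, (φ' ((j:ℕ):ZMod (2*n)) : A) * x ^ j := by
    rw [hqdef, map_sum]
    refine Finset.sum_congr rfl (fun j _ => ?_)
    rw [map_mul, map_pow, AdjoinRoot.mk_X, AdjoinRoot.mk_C]
    simp [hxdef]
  have hmkqt : AdjoinRoot.mk ((X:ℤ[X])^n + 1) qt
      = ∑ j ∈ Finset.range n, (φ' (-((j:ℕ):ZMod (2*n))) : A) * x ^ j := by
    rw [hqtdef, map_sum]
    refine Finset.sum_congr rfl (fun j _ => ?_)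
    rw [map_mul, map_pow, AdjoinRoot.mk_X, AdjoinRoot.mk_C]
    simp [hxdef]
  have hEq : (∑ k : ZMod (2*n), (φ' k : A) * x ^ k.val)
      = 2 * AdjoinRoot.mk ((X:ℤ[X])^n + 1) q := by
    rw [hmkq]; exact halve φ' hflip
  have hEq' : (∑ k : ZMod (2*n), (φ' k : A) * x ^ (-k).val)
      = 2 * AdjoinRoot.mk ((X:ℤ[X])^n + 1) qt := by
    rw [hneg, hmkqt]
    refine halve (fun k => φ' (-k)) (fun k => ?_)
    show φ' (-(k + ((n:ℕ):ZMod (2*n)))) = - φ' (-k)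
    rw [neg_add, hnegn, hflip]
  -- the master identity
  have hprod : (4:A) * (AdjoinRoot.mk ((X:ℤ[X])^n + 1) q * AdjoinRoot.mk ((X:ℤ[X])^n + 1) qt
      - ((n:ℤ) : A)) = 0 := by
    have h := hEE'
    rw [hEq, hEq'] at h
    push_cast [A] at h ⊢
    linear_combination h
  have hdvd : ((X:ℤ[X])^n + 1) ∣ 4*(q*qt - Polynomial.C ((n:ℕ):ℤ)) := by
    rw [← AdjoinRoot.mk_eq_zero]
    have : AdjoinRoot.mk ((X:ℤ[X])^n + 1) (4*(q*qt - Polynomial.C ((n:ℕ):ℤ)))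
        = (4:A) * (AdjoinRoot.mk _ q * AdjoinRoot.mk _ qt - ((n:ℤ) : A)) := by
      rw [map_mul, map_sub, map_mul, AdjoinRoot.mk_C, map_ofNat, eq_intCast]
    rw [this, hprod]
  obtain ⟨g0, hg0⟩ := hdvd
  -- divide by 4
  have hg0map : ((X:(ZMod 4)[X])^n + 1) * (g0.map (Int.castRingHom (ZMod 4))) = 0 := by
    have := congrArg (fun p => p.map (Int.castRingHom (ZMod 4))) hg0
    simp only [Polynomial.map_mul, Polynomial.map_add, Polynomial.map_pow, Polynomial.map_sub,
      Polynomial.map_X, Polynomial.map_one, Polynomial.map_C, Polynomial.map_ofNat] at this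
    rw [show ((4:(ZMod 4)[X])) = 0 from by
      rw [← map_ofNat (Polynomial.C : ZMod 4 →+* (ZMod 4)[X]) 4, show (4 : ZMod 4) = 0 by decide,
        map_zero], zero_mul] at this
    exact this.symm
  have hg0z : g0.map (Int.castRingHom (ZMod 4)) = 0 := by
    have hmonic : ((X:(ZMod 4)[X])^n + 1).Monic := by
      rw [← Polynomial.C_1]
      exact Polynomial.monic_X_pow_add_C _ (by omega)
    exact (hmonic.mul_right_eq_zero_iff).mp hg0map
  obtain ⟨g1, hg1⟩ := dvd_of_map_eq_zero' 4 g0 hg0z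
  have hM0 : q*qt - Polynomial.C ((n:ℕ):ℤ) = ((X:ℤ[X])^n + 1) * g1 := by
    have h4 : (Polynomial.C ((4:ℕ):ℤ)) = (4:ℤ[X]) := by norm_num
    rw [h4] at hg1
    apply mul_left_cancel₀ (show (4:ℤ[X]) ≠ 0 by norm_num)
    rw [hg0, hg1]; ring
  -- q, qt ≡ S mod 2
  have hq2 : ∀ p : ℤ[X], ∀ c : ℕ → ℤ, (∀ j, c j = 1 ∨ c j = -1) →
      (2:ℤ[X]) ∣ (∑ j ∈ Finset.range n, Polynomial.C (c j) * X^j) - ∑ j ∈ Finset.range n, X^j := by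
    intro p c hc
    rw [← Finset.sum_sub_distrib]
    apply Finset.dvd_sum
    intro j _
    rcases hc j with h | h
    · rw [h]; simp
    · rw [h]
      refine ⟨-(X^j), ?_⟩
      rw [map_neg, Polynomial.C_1]
      ring
  obtain ⟨ρ, hρ⟩ := hq2 q (fun j => φ' ((j:ℕ):ZMod (2*n))) (fun j => hφ' _)
  obtain ⟨ρ', hρ'⟩ := hq2 qt (fun j => φ' (-((j:ℕ):ZMod (2*n)))) (fun j => hφ' _)
  refine no_gpbs_poly n hn3 ρ ρ' g1 ?_
  have hqS : q = (∑ j ∈ Finset.range n, (X:ℤ[X])^j) + 2*ρ := by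
    rw [← hρ, hqdef]; ring
  have hqtS : qt = (∑ j ∈ Finset.range n, (X:ℤ[X])^j) + 2*ρ' := by
    rw [← hρ', hqtdef]; ring
  rw [← hqS, ← hqtS]
  linear_combination hM0

/-- a ±1 sequence `φ` of length `n` is a generalized perfect binary
sequence (the expansion `φ'` has zero autocorrelation at every shift `w` with
`0 < w < 2n`, other than the forbidden shift `w = n`) if and only if `n = 2` or
`n = 1`; i.e. no generalized perfect binary sequence of length `n > 2` exists. -/
theorem stmt_2 (n : ℕ) [NeZero n] [NeZero (2 * n)]
    (φ : ZMod n → ℤ) (hφ : ∀ k, φ k = 1 ∨ φ k = -1)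
    (φ' : ZMod (2 * n) → ℤ)
    (hexp : ∀ k : ZMod (2 * n),
      φ' k = (if k.val < n then (1 : ℤ) else -1) * φ ((k.val : ZMod n))) :
    (∀ w : ZMod (2 * n), w ≠ 0 → w ≠ (n : ZMod (2 * n)) →
        ∑ k : ZMod (2 * n), φ' k * φ' (k + w) = 0) ↔ (n = 2 ∨ n = 1) := by
  constructor
  · intro H
    by_contra hcon
    push_neg at hcon
    have hn3 : 3 ≤ n := by
      have := NeZero.pos n
      omega
    exact forward_false n hn3 φ hφ φ' hexp H
  · rintro (rfl | rfl)
    · -- n = 2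
      clear ‹NeZero 2›
      intro w hw0 hwn
      have hw : w = 1 ∨ w = 3 := by
        revert hw0 hwn
        revert w
        decide
      have v0 : φ' 0 = φ 0 := by
        rw [hexp, if_pos (by decide : (0:ZMod (2*2)).val < 2),
          show ((0:ZMod (2*2)).val : ZMod 2) = 0 from by decide]
        ring
      have v1 : φ' 1 = φ 1 := by
        rw [hexp, if_pos (by decide : (1:ZMod (2*2)).val < 2),
          show ((1:ZMod (2*2)).val : ZMod 2) = 1 from by decide]
        ring
      have v2 : φ' 2 = -(φ 0) := by
        rw [hexp, if_neg (by decide : ¬((2:ZMod (2*2)).val < 2)),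
          show ((2:ZMod (2*2)).val : ZMod 2) = 0 from by decide]
        ring
      have v3 : φ' 3 = -(φ 1) := by
        rw [hexp, if_neg (by decide : ¬((3:ZMod (2*2)).val < 2)),
          show ((3:ZMod (2*2)).val : ZMod 2) = 1 from by decide]
        ring
      have hsum : ∀ f : ZMod (2*2) → ℤ, (∑ k : ZMod (2*2), f k) = f 0 + f 1 + f 2 + f 3 := by
        intro f
        exact Fin.sum_univ_four f
      rcases hw with rfl | rfl
      · rw [hsum]
        rw [show ((0:ZMod (2*2)) + 1) = 1 from by decide, show ((1:ZMod (2*2)) + 1) = 2 from by decide,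
          show ((2:ZMod (2*2)) + 1) = 3 from by decide, show ((3:ZMod (2*2)) + 1) = 0 from by decide]
        rw [v0, v1, v2, v3]
        ring
      · rw [hsum]
        rw [show ((0:ZMod (2*2)) + 3) = 3 from by decide, show ((1:ZMod (2*2)) + 3) = 0 from by decide,
          show ((2:ZMod (2*2)) + 3) = 1 from by decide, show ((3:ZMod (2*2)) + 3) = 2 from by decide]
        rw [v0, v1, v2, v3]
        ring
    · -- n = 1
      intro w hw0 hwn
      exfalso
      have hw : ∀ v : ZMod (2*1), v = 0 ∨ v = ((1:ℕ):ZMod (2*1)) := by decide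
      rcases hw w with h | h
      · exact hw0 h
      · exact hwn h
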